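/- In the construction of Theorem 4.2, the map sending v ∈ V(M) to {π₁(v)} ∪ {π₂(v) if v ∈ V(M₂)} induces a bisimulation between the pointed structure M (with nodes of X marked by distinct fresh propositions) and the structure M' (with the same markings); consequently v and πᵢ(v) are bisimilar for every v ∈ V(Mᵢ). -/

import Mathlib

/-- Weak directed separation with interface `X`. -/
def WeakDirSep {V : Type*} (E : V → V → Prop) (V1 V2 X : Set V) : Prop :=
  V1 ∪ V2 = Set.univ ∧ X ⊆ V1 ∩ V2 ∧
    (∀ u v, E u v → u ∈ V2 \ (V1 ∩ V2) → v ∉ V1 \ (V1 ∩ V2)) ∧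
    (∀ u v, E u v → u ∈ (V1 ∩ V2) \ X → v ∉ V1 \ V2)

-- The map `π_b`: nodes of `X` are kept, all other nodes are tagged with side `b`.
open Classical in
noncomputable def glueMap {V : Type*} (X : Set V) (b : Bool) (v : V) : V ⊕ (Bool × V) :=
  if v ∈ X then Sum.inl v else Sum.inr (b, v)

/-- Edges of the glued structure `M'`. -/
def glueEdge {V : Type*} (E : V → V → Prop) (V1 V2 X : Set V)
    (a b : V ⊕ (Bool × V)) : Prop :=
  (∃ v w, v ∈ V1 ∧ w ∈ V1 ∧ E v w ∧ a = glueMap X false v ∧ b = glueMap X false w) ∨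
  (∃ v w, v ∈ V2 ∧ w ∈ V2 ∧ E v w ∧ a = glueMap X true v ∧ b = glueMap X true w) ∨
  (∃ v w, v ∈ V1 ∧ w ∈ V2 ∧ E v w ∧ a = glueMap X false v ∧ b = glueMap X true w)

/-- Valuation of atomic propositions on the glued structure, inherited from `M`. -/
def glueVal {V A : Type*} (val : A → Set V) (V1 V2 X : Set V) (a : A) :
    Set (V ⊕ (Bool × V)) :=
  glueMap X false '' (V1 ∩ val a) ∪ glueMap X true '' (V2 ∩ val a)

/-- `R` is a bisimulation between the Kripke structures `(V, E, val)` and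
`(W, E', val')`: it preserves atomic propositions and satisfies the forth and
back conditions. -/
def IsBisimulation {V W A : Type*} (E : V → V → Prop) (val : A → Set V)
    (E' : W → W → Prop) (val' : A → Set W) (R : Set (V × W)) : Prop :=
  (∀ v w, (v, w) ∈ R → ∀ a, v ∈ val a ↔ w ∈ val' a) ∧
  (∀ v w, (v, w) ∈ R → ∀ v', E v v' → ∃ w', E' w w' ∧ (v', w') ∈ R) ∧
  (∀ v w, (v, w) ∈ R → ∀ w', E' w w' → ∃ v', E v v' ∧ (v', w') ∈ R)

/-- In the construction of Theorem 4.2, the relation pairing every `v ∈ V(Mᵢ)`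
with `πᵢ(v)` is a bisimulation between `M` (with any valuation, in particular
one marking the interface nodes by distinct fresh propositions) and the glued
structure `M'` (with the inherited markings); consequently `v` and `πᵢ(v)` are
bisimilar for every `v ∈ V(Mᵢ)`. -/
theorem glue_bisimulation {V A : Type*} (E : V → V → Prop) (val : A → Set V)
    (V1 V2 X : Set V) (h : WeakDirSep E V1 V2 X) :
    IsBisimulation E val (glueEdge E V1 V2 X) (glueVal val V1 V2 X)
      {p | (p.1 ∈ V1 ∧ p.2 = glueMap X false p.1) ∨
           (p.1 ∈ V2 ∧ p.2 = glueMap X true p.1)} ∧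
    (∀ v ∈ V1, (v, glueMap X false v) ∈
      {p : V × (V ⊕ (Bool × V)) | (p.1 ∈ V1 ∧ p.2 = glueMap X false p.1) ∨
           (p.1 ∈ V2 ∧ p.2 = glueMap X true p.1)}) ∧
    (∀ v ∈ V2, (v, glueMap X true v) ∈
      {p : V × (V ⊕ (Bool × V)) | (p.1 ∈ V1 ∧ p.2 = glueMap X false p.1) ∨
           (p.1 ∈ V2 ∧ p.2 = glueMap X true p.1)}) := by
  obtain ⟨hcov, hX, hsep1, hsep2⟩ := h
  have hinj : ∀ {b c : Bool} {v w : V}, glueMap X b v = glueMap X c w → v = w := by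
    intro b c v w hvw
    unfold glueMap at hvw
    split_ifs at hvw <;> simp_all
  have hXeq : ∀ {v : V}, v ∈ X → ∀ b c : Bool, glueMap X b v = glueMap X c v := by
    intro v hv b c; simp [glueMap, hv]
  have hmem : ∀ v : V, v ∈ V1 ∨ v ∈ V2 := by
    intro v
    have : v ∈ V1 ∪ V2 := by rw [hcov]; trivial
    exact this
  refine ⟨⟨?_, ?_, ?_⟩, ?_, ?_⟩
  · -- atomic propositions
    intro v w hvw a
    change (v ∈ V1 ∧ w = glueMap X false v) ∨ (v ∈ V2 ∧ w = glueMap X true v) at hvw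
    rcases hvw with ⟨hv, rfl⟩ | ⟨hv, rfl⟩ <;>
    · constructor
      · intro ha
        first
          | exact Or.inl ⟨v, ⟨hv, ha⟩, rfl⟩
          | exact Or.inr ⟨v, ⟨hv, ha⟩, rfl⟩
      · rintro (⟨u, ⟨_, hua⟩, heq⟩ | ⟨u, ⟨_, hua⟩, heq⟩) <;>
          (cases hinj heq.symm; exact hua)
  · -- forth
    intro v w hvw v' hE
    change (v ∈ V1 ∧ w = glueMap X false v) ∨ (v ∈ V2 ∧ w = glueMap X true v) at hvw
    rcases hvw with ⟨hv, rfl⟩ | ⟨hv, rfl⟩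
    · rcases Classical.em (v' ∈ V1) with hv' | hv'
      · exact ⟨glueMap X false v', Or.inl ⟨v, v', hv, hv', hE, rfl, rfl⟩,
          Or.inl ⟨hv', rfl⟩⟩
      · have hv'2 : v' ∈ V2 := (hmem v').resolve_left hv'
        exact ⟨glueMap X true v', Or.inr (Or.inr ⟨v, v', hv, hv'2, hE, rfl, rfl⟩),
          Or.inr ⟨hv'2, rfl⟩⟩
    · rcases Classical.em (v' ∈ V2) with hv' | hv'
      · exact ⟨glueMap X true v', Or.inr (Or.inl ⟨v, v', hv, hv', hE, rfl, rfl⟩),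
          Or.inr ⟨hv', rfl⟩⟩
      · -- v' ∈ V1 \ V2 ; use the separation conditions to show v ∈ X
        have hv'1 : v' ∈ V1 := (hmem v').resolve_right hv'
        have hv12 : v ∈ V1 ∩ V2 := by
          by_contra hvn
          exact hsep1 v v' hE ⟨hv, hvn⟩ ⟨hv'1, fun hc => hv' hc.2⟩
        have hvX : v ∈ X := by
          by_contra hvX
          exact hsep2 v v' hE ⟨hv12, hvX⟩ ⟨hv'1, hv'⟩
        refine ⟨glueMap X false v', Or.inl ⟨v, v', hv12.1, hv'1, hE, ?_, rfl⟩,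
          Or.inl ⟨hv'1, rfl⟩⟩
        exact hXeq hvX true false
  · -- back
    intro v w hvw w' hE'
    change (v ∈ V1 ∧ w = glueMap X false v) ∨ (v ∈ V2 ∧ w = glueMap X true v) at hvw
    rcases hvw with ⟨hv, rfl⟩ | ⟨hv, rfl⟩ <;>
    rcases hE' with ⟨u, u', hu1, hu'1, hE, heq, rfl⟩ | ⟨u, u', hu2, hu'2, hE, heq, rfl⟩ |
         ⟨u, u', hu1, hu'2, hE, heq, rfl⟩ <;>
      (cases hinj heq) <;>
      first
        | exact ⟨u', hE, Or.inl ⟨‹u' ∈ V1›, rfl⟩⟩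
        | exact ⟨u', hE, Or.inr ⟨‹u' ∈ V2›, rfl⟩⟩
  · exact fun v hv => Or.inl ⟨hv, rfl⟩
  · exact fun v hv => Or.inr ⟨hv, rfl⟩
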